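/- Let G be a claw-free, K_5-minor-free graph containing no clique on 4 vertices, and let v be a vertex of degree 5 in G. If the graph G − v obtained by deleting v is 2-clique-colorable, then G is 2-clique-colorable. -/

import Mathlib

open SimpleGraph

/-- `H` is a minor of `G`: there is a family of pairwise disjoint nonempty connected
branch sets in `G`, one for each vertex of `H`, with an edge of `G` between the branch
sets of any two adjacent vertices of `H`. -/
def SimpleGraph.HasMinor {V W : Type*} (G : SimpleGraph V) (H : SimpleGraph W) : Prop :=
  ∃ f : W → Set V,
    (∀ w, (f w).Nonempty) ∧
    (∀ w, (G.induce (f w)).Connected) ∧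
    (∀ w₁ w₂, w₁ ≠ w₂ → Disjoint (f w₁) (f w₂)) ∧
    (∀ w₁ w₂, H.Adj w₁ w₂ → ∃ v₁ ∈ f w₁, ∃ v₂ ∈ f w₂, G.Adj v₁ v₂)

/-- `G` contains no induced subgraph isomorphic to the claw `K_{1,3}`. -/
def SimpleGraph.ClawFree {V : Type*} (G : SimpleGraph V) : Prop :=
  IsEmpty (completeBipartiteGraph (Fin 1) (Fin 3) ↪g G)

/-- `s` is a maximal clique of `G`. -/
def SimpleGraph.IsMaxClique {V : Type*} (G : SimpleGraph V) (s : Set V) : Prop :=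
  G.IsClique s ∧ ∀ t : Set V, G.IsClique t → s ⊆ t → s = t

/-- `c` is a clique-coloring of `G`: no maximal clique with at least two vertices
is monochromatic. -/
def SimpleGraph.IsCliqueColoring {V : Type*} (G : SimpleGraph V) {k : ℕ} (c : V → Fin k) : Prop :=
  ∀ s : Set V, G.IsMaxClique s → s.Nontrivial → ∃ u ∈ s, ∃ v ∈ s, c u ≠ c v

/-- `G` is `k`-clique-colorable. -/
def SimpleGraph.CliqueColorable {V : Type*} (G : SimpleGraph V) (k : ℕ) : Prop :=
  ∃ c : V → Fin k, G.IsCliqueColoring c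

/-- `G` is an odd cycle, i.e. isomorphic to `C_n` for some odd `n ≥ 3`. -/
def SimpleGraph.IsOddCycle {V : Type*} (G : SimpleGraph V) : Prop :=
  ∃ n : ℕ, 3 ≤ n ∧ Odd n ∧ Nonempty (G ≃g cycleGraph n)

/-- `D` meets every (nonempty) maximal clique of `G`. -/
def SimpleGraph.IsCliqueTransversal {V : Type*} (G : SimpleGraph V) (D : Set V) : Prop :=
  ∀ s : Set V, G.IsMaxClique s → s.Nonempty → (D ∩ s).Nonempty

/-- `G` is `H`-minor-free, but adding any edge between two distinct nonadjacent
vertices creates an `H` minor. -/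
def SimpleGraph.EdgeMaximalMinorFree {V W : Type*} (G : SimpleGraph V) (H : SimpleGraph W) : Prop :=
  ¬ G.HasMinor H ∧ ∀ u v : V, u ≠ v → ¬ G.Adj u v →
    (G ⊔ fromEdgeSet {s(u, v)}).HasMinor H

private lemma claw_aux {V : Type*} (G : SimpleGraph V) (hclaw : G.ClawFree)
    {x y z w : V} (hxy : G.Adj x y) (hxz : G.Adj x z) (hxw : G.Adj x w)
    (hyz : ¬ G.Adj y z) (hyw : ¬ G.Adj y w) (hzw : ¬ G.Adj z w)
    (hyz' : y ≠ z) (hyw' : y ≠ w) (hzw' : z ≠ w) : False := by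
  apply hclaw.false
  refine ⟨⟨Sum.elim (fun _ => x) ![y, z, w], ?_⟩, ?_⟩
  · rintro (a | a) (b | b) hab
    · exact congrArg Sum.inl (Subsingleton.elim a b)
    · exfalso; simp only [Sum.elim_inl, Sum.elim_inr] at hab
      fin_cases b <;> simp_all
    · exfalso; simp only [Sum.elim_inl, Sum.elim_inr] at hab
      fin_cases a <;> simp_all
    · congr 1
      simp only [Sum.elim_inr] at hab
      fin_cases a <;> fin_cases b <;> simp_all
  · rintro (a | a) (b | b) <;> fin_cases a <;> fin_cases b <;>
      simp_all [completeBipartiteGraph, G.adj_comm, DFunLike.coe]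

private lemma k4_aux {V : Type*} [DecidableEq V] (G : SimpleGraph V) (h4 : G.CliqueFree 4)
    {p q r s : V} (hpq : G.Adj p q) (hpr : G.Adj p r) (hps : G.Adj p s)
    (hqr : G.Adj q r) (hqs : G.Adj q s) (hrs : G.Adj r s) : False := by
  refine h4 {p, q, r, s} ⟨?_, ?_⟩
  · intro a ha b hb hab
    simp only [Finset.coe_insert, Set.mem_insert_iff, Finset.coe_singleton,
      Set.mem_singleton_iff] at ha hb
    rcases ha with rfl | rfl | rfl | rfl <;> rcases hb with rfl | rfl | rfl | rfl <;>
      first | exact absurd rfl hab | assumption | (exact (by assumption : G.Adj _ _).symm)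
  · have h1 : p ≠ q := G.ne_of_adj hpq
    have h2 : p ≠ r := G.ne_of_adj hpr
    have h3 : p ≠ s := G.ne_of_adj hps
    have h4 : q ≠ r := G.ne_of_adj hqr
    have h5 : q ≠ s := G.ne_of_adj hqs
    have h6 : r ≠ s := G.ne_of_adj hrs
    rw [Finset.card_insert_of_notMem (by simp [h1, h2, h3]),
      Finset.card_insert_of_notMem (by simp [h4, h5]),
      Finset.card_insert_of_notMem (by simp [h6]), Finset.card_singleton]

private lemma rim_aux {V : Type*} [Fintype V] [DecidableEq V]
    (G : SimpleGraph V) [DecidableRel G.Adj]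
    (hclaw : G.ClawFree) (h4 : G.CliqueFree 4) (v : V) (hv : G.degree v = 5) :
    ∃ a : Fin 5 → V, Function.Injective a ∧ (∀ i, G.Adj v (a i)) ∧
      (∀ x, G.Adj v x → ∃ i, a i = x) ∧
      (∀ i j, G.Adj (a i) (a j) ↔ (j = i + 1 ∨ i = j + 1)) := by
  classical
  set n : Finset V := G.neighborFinset v with hn
  have hncard : n.card = 5 := hv
  have hmemn : ∀ x, x ∈ n ↔ G.Adj v x := fun x => G.mem_neighborFinset v x
  have indep : ∀ x ∈ n, ∀ y ∈ n, ∀ z ∈ n, ¬G.Adj x y → ¬G.Adj x z → ¬G.Adj y z →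
      x ≠ y → x ≠ z → y ≠ z → False := by
    intro x hx y hy z hz h1 h2 h3 d1 d2 d3
    exact claw_aux G hclaw ((hmemn x).1 hx) ((hmemn y).1 hy) ((hmemn z).1 hz) h1 h2 h3 d1 d2 d3
  have notri : ∀ x ∈ n, ∀ y ∈ n, ∀ z ∈ n, G.Adj x y → G.Adj x z → G.Adj y z → False := by
    intro x hx y hy z hz h1 h2 h3
    exact k4_aux G h4 ((hmemn x).1 hx) ((hmemn y).1 hy) ((hmemn z).1 hz) h1 h2 h3
  have two_nbrs : ∀ x ∈ n, ∃ b t : V, b ∈ n ∧ t ∈ n ∧ b ≠ t ∧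
      (∀ w ∈ n, G.Adj x w ↔ (w = b ∨ w = t)) := by
    intro x hx
    set F := n.filter (fun w => G.Adj x w) with hF
    have hFmem : ∀ w, w ∈ F ↔ (w ∈ n ∧ G.Adj x w) := fun w => Finset.mem_filter
    have hub : F.card ≤ 2 := by
      by_contra hub
      have h3 : 2 < F.card := by omega
      obtain ⟨a, ha, b, hb, e, he, hab, hae, hbe⟩ := Finset.two_lt_card.1 h3
      rw [hFmem] at ha hb he
      by_cases h1 : G.Adj a b
      · exact notri x hx a ha.1 b hb.1 ha.2 hb.2 h1
      by_cases h2 : G.Adj a e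
      · exact notri x hx a ha.1 e he.1 ha.2 he.2 h2
      by_cases h3 : G.Adj b e
      · exact notri x hx b hb.1 e he.1 hb.2 he.2 h3
      exact indep a ha.1 b hb.1 e he.1 h1 h2 h3 hab hae hbe
    have hlb : 2 ≤ F.card := by
      by_contra hlb
      have hM : 2 < ((n.erase x) \ F).card := by
        have h1 : (n.erase x).card = 4 := by rw [Finset.card_erase_of_mem hx, hncard]
        have h2 := Finset.le_card_sdiff F (n.erase x)
        omega
      obtain ⟨a, ha, b, hb, e, he, hab, hae, hbe⟩ := Finset.two_lt_card.1 hM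
      have prop : ∀ w ∈ (n.erase x) \ F, (w ∈ n ∧ ¬ G.Adj x w) ∧ x ≠ w := by
        intro w hw
        obtain ⟨hw1, hw2⟩ := Finset.mem_sdiff.1 hw
        have hwn : w ∈ n := Finset.mem_of_mem_erase hw1
        exact ⟨⟨hwn, fun hadj => hw2 ((hFmem w).2 ⟨hwn, hadj⟩)⟩,
          (Finset.ne_of_mem_erase hw1).symm⟩
      obtain ⟨⟨han, hax⟩, hxa⟩ := prop a ha
      obtain ⟨⟨hbn, hbx⟩, hxb⟩ := prop b hb
      obtain ⟨⟨hen, hex⟩, hxe⟩ := prop e he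
      by_cases h1 : G.Adj a b
      · by_cases h2 : G.Adj a e
        · by_cases h3 : G.Adj b e
          · exact notri a han b hbn e hen h1 h2 h3
          · exact indep x hx b hbn e hen hbx hex h3 hxb hxe hbe
        · exact indep x hx a han e hen hax hex h2 hxa hxe hae
      · exact indep x hx a han b hbn hax hbx h1 hxa hxb hab
    obtain ⟨b, t, hbt, hFeq⟩ := Finset.card_eq_two.1 (le_antisymm hub hlb)
    have hbF : b ∈ F := by rw [hFeq]; simp
    have htF : t ∈ F := by rw [hFeq]; simp
    refine ⟨b, t, ((hFmem b).1 hbF).1, ((hFmem t).1 htF).1, hbt, ?_⟩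
    intro w hw
    constructor
    · intro hadj
      have : w ∈ F := (hFmem w).2 ⟨hw, hadj⟩
      rw [hFeq] at this; simpa using this
    · rintro (rfl | rfl)
      · exact ((hFmem w).1 hbF).2
      · exact ((hFmem w).1 htF).2
  have other : ∀ x ∈ n, ∀ b ∈ n, G.Adj x b → ∃ t, t ∈ n ∧ t ≠ b ∧ G.Adj x t ∧
      (∀ w ∈ n, G.Adj x w ↔ (w = b ∨ w = t)) := by
    intro x hx b hb hadj
    obtain ⟨y, z, hy, hz, hyz, hiff⟩ := two_nbrs x hx
    rcases (hiff b hb).1 hadj with rfl | rfl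
    · exact ⟨z, hz, hyz.symm, (hiff z hz).2 (Or.inr rfl), hiff⟩
    · exact ⟨y, hy, hyz, (hiff y hy).2 (Or.inl rfl),
        fun w hw => (hiff w hw).trans or_comm⟩
  -- build the labeling
  have hnne : n.Nonempty := by rw [← Finset.card_pos, hncard]; omega
  obtain ⟨a0, ha0⟩ := hnne
  obtain ⟨a1, a4, ha1, ha4, h14, iff0⟩ := two_nbrs a0 ha0
  have adj01 : G.Adj a0 a1 := (iff0 a1 ha1).2 (Or.inl rfl)
  have adj04 : G.Adj a0 a4 := (iff0 a4 ha4).2 (Or.inr rfl)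
  obtain ⟨a2, ha2, h20, adj12, iff1⟩ := other a1 ha1 a0 ha0 adj01.symm
  have h01 : a0 ≠ a1 := G.ne_of_adj adj01
  have h04 : a0 ≠ a4 := G.ne_of_adj adj04
  have h12 : a1 ≠ a2 := G.ne_of_adj adj12
  have h24 : a2 ≠ a4 := by
    intro he
    subst he
    -- now a4 is renamed: the two outside vertices
    have hsub : ({a0, a1, a2} : Finset V) ⊆ n := by
      intro w hw
      simp only [Finset.mem_insert, Finset.mem_singleton] at hw
      rcases hw with rfl | rfl | rfl <;> assumption
    have hm2 : (n \ {a0, a1, a2}).card = 2 := by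
      rw [Finset.card_sdiff_of_subset hsub, hncard]
      rw [Finset.card_insert_of_notMem (by simp [h01, h20.symm]),
        Finset.card_insert_of_notMem (by simp [h12]), Finset.card_singleton]
    obtain ⟨x, x', hxx, hmeq⟩ := Finset.card_eq_two.1 hm2
    have key : ∀ u ∈ n \ {a0, a1, a2}, G.Adj u a2 := by
      intro u hu
      obtain ⟨hun, hu3⟩ := Finset.mem_sdiff.1 hu
      simp only [Finset.mem_insert, Finset.mem_singleton, not_or] at hu3
      obtain ⟨hu0, hu1, hu2⟩ := hu3
      obtain ⟨y, z, hy, hz, hyz, hiffu⟩ := two_nbrs u hun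
      have hadjy : G.Adj u y := (hiffu y hy).2 (Or.inl rfl)
      have hadjz : G.Adj u z := (hiffu z hz).2 (Or.inr rfl)
      have hside : ∀ w ∈ n, G.Adj u w → w ≠ a2 → w ∈ ({x, x'} : Finset V) ∧ w ≠ u := by
        intro w hw hadj hw2
        have hw0 : w ≠ a0 := by
          rintro rfl
          rcases (iff0 u hun).1 hadj.symm with rfl | rfl
          · exact hu1 rfl
          · exact hu2 rfl
        have hw1 : w ≠ a1 := by
          rintro rfl
          rcases (iff1 u hun).1 hadj.symm with rfl | rfl
          · exact hu0 rfl
          · exact hu2 rfl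
        refine ⟨?_, (G.ne_of_adj hadj).symm⟩
        rw [← hmeq]
        exact Finset.mem_sdiff.2 ⟨hw, by simp [hw0, hw1, hw2]⟩
      by_cases hy2 : y = a2
      · exact hy2 ▸ hadjy
      by_cases hz2 : z = a2
      · exact hz2 ▸ hadjz
      exfalso
      obtain ⟨hym, hyu⟩ := hside y hy hadjy hy2
      obtain ⟨hzm, hzu⟩ := hside z hz hadjz hz2
      have hum : u ∈ ({x, x'} : Finset V) := hmeq ▸ hu
      simp only [Finset.mem_insert, Finset.mem_singleton] at hym hzm hum
      rcases hym with h1 | h1 <;> rcases hzm with h2 | h2 <;> rcases hum with h3 | h3 <;>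
        first
        | exact hyz (h1.trans h2.symm)
        | exact hyu (h1.trans h3.symm)
        | exact hzu (h2.trans h3.symm)
    -- a2 has 4 distinct neighbours: a0 a1 x x'
    have hxn : x ∈ n := by
      have : x ∈ n \ {a0, a1, a2} := hmeq ▸ (by simp)
      exact (Finset.mem_sdiff.1 this).1
    have hx'n : x' ∈ n := by
      have : x' ∈ n \ {a0, a1, a2} := hmeq ▸ (by simp)
      exact (Finset.mem_sdiff.1 this).1
    have hxm : x ∈ n \ {a0, a1, a2} := hmeq ▸ (by simp)
    have hx'm : x' ∈ n \ {a0, a1, a2} := hmeq ▸ (by simp)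
    have hxprop := Finset.mem_sdiff.1 hxm
    have hx'prop := Finset.mem_sdiff.1 hx'm
    simp only [Finset.mem_insert, Finset.mem_singleton, not_or] at hxprop hx'prop
    obtain ⟨y, z, hy, hz, hyz, hiffa⟩ := two_nbrs a2 ha2
    have m0 : a0 = y ∨ a0 = z := (hiffa a0 ha0).1 adj04.symm
    have m1 : a1 = y ∨ a1 = z := (hiffa a1 ha1).1 adj12.symm
    have mx : x = y ∨ x = z := (hiffa x hxn).1 (key x hxm).symm
    have mx' : x' = y ∨ x' = z := (hiffa x' hx'n).1 (key x' hx'm).symm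
    rcases m0 with h0 | h0 <;> rcases m1 with h1 | h1 <;>
      rcases mx with h2 | h2 <;> rcases mx' with h3 | h3 <;>
      first
      | exact h01 (h0.trans h1.symm)
      | exact hxprop.2.1 (h2.trans h0.symm)
      | exact hxprop.2.2.1 (h2.trans h1.symm)
      | exact hx'prop.2.1 (h3.trans h0.symm)
      | exact hx'prop.2.2.1 (h3.trans h1.symm)
      | exact hxx (h2.trans h3.symm)
  obtain ⟨a3, ha3, h31, adj23, iff2⟩ := other a2 ha2 a1 ha1 adj12.symm
  have h23 : a2 ≠ a3 := G.ne_of_adj adj23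
  have h30 : a3 ≠ a0 := by
    rintro rfl
    rcases (iff0 a2 ha2).1 adj23.symm with h | h
    · exact h12 h.symm
    · exact h24 h
  obtain ⟨t, htn, ht2, adj3t, iff3⟩ := other a3 ha3 a2 ha2 adj23.symm
  have h34 : a3 ≠ a4 := by
    intro he
    have hadj30 : G.Adj a3 a0 := by rw [he]; exact adj04.symm
    have hteq : t = a0 := by
      rcases (iff3 a0 ha0).1 hadj30 with hh | hh
      · exact (h20 hh.symm).elim
      · exact hh.symm
    have hcard4 : ({a0, a1, a2, a3} : Finset V).card = 4 := by
      rw [Finset.card_insert_of_notMem (by simp [h01, Ne.symm h20, Ne.symm h30]),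
        Finset.card_insert_of_notMem (by simp [h12, Ne.symm h31]),
        Finset.card_insert_of_notMem (by simp [h23]), Finset.card_singleton]
    have hsub4 : ({a0, a1, a2, a3} : Finset V) ⊆ n := by
      intro w hw
      simp only [Finset.mem_insert, Finset.mem_singleton] at hw
      rcases hw with rfl | rfl | rfl | rfl <;> assumption
    have hm1 : (n \ {a0, a1, a2, a3}).card = 1 := by
      rw [Finset.card_sdiff_of_subset hsub4, hncard, hcard4]
    obtain ⟨x, hxeq⟩ := Finset.card_eq_one.1 hm1
    have hxm : x ∈ n \ ({a0, a1, a2, a3} : Finset V) := hxeq ▸ (by simp)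
    obtain ⟨hxn, hxne⟩ := Finset.mem_sdiff.1 hxm
    simp only [Finset.mem_insert, Finset.mem_singleton, not_or] at hxne
    obtain ⟨hx0, hx1, hx2, hx3⟩ := hxne
    obtain ⟨y, z, hy, hz, hyz, hiffx⟩ := two_nbrs x hxn
    have hnonbr : ∀ w ∈ n, ¬ G.Adj x w := by
      intro w hw hadj
      by_cases hw0 : w = a0
      · subst hw0
        rcases (iff0 x hxn).1 hadj.symm with hh | hh
        · exact hx1 hh
        · rw [← he] at hh; exact hx3 hh
      by_cases hw1 : w = a1
      · subst hw1
        rcases (iff1 x hxn).1 hadj.symm with hh | hh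
        · exact hx0 hh
        · exact hx2 hh
      by_cases hw2 : w = a2
      · subst hw2
        rcases (iff2 x hxn).1 hadj.symm with hh | hh
        · exact hx1 hh
        · exact hx3 hh
      by_cases hw3 : w = a3
      · subst hw3
        rcases (iff3 x hxn).1 hadj.symm with hh | hh
        · exact hx2 hh
        · exact hx0 (hh.trans hteq)
      have : w ∈ n \ ({a0, a1, a2, a3} : Finset V) :=
        Finset.mem_sdiff.2 ⟨hw, by simp [hw0, hw1, hw2, hw3]⟩
      rw [hxeq] at this
      simp only [Finset.mem_singleton] at this
      subst this
      exact G.irrefl hadj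
    exact hnonbr y hy ((hiffx y hy).2 (Or.inl rfl))
  -- full enumeration of n
  have hcard5 : ({a0, a1, a2, a3, a4} : Finset V).card = 5 := by
    rw [Finset.card_insert_of_notMem (by simp [h01, Ne.symm h20, Ne.symm h30, h04]),
      Finset.card_insert_of_notMem (by simp [h12, Ne.symm h31, h14]),
      Finset.card_insert_of_notMem (by simp [h23, h24]),
      Finset.card_insert_of_notMem (by simp [h34]), Finset.card_singleton]
  have hsub5 : ({a0, a1, a2, a3, a4} : Finset V) ⊆ n := by
    intro w hw
    simp only [Finset.mem_insert, Finset.mem_singleton] at hw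
    rcases hw with rfl | rfl | rfl | rfl | rfl <;> assumption
  have hneq : n = ({a0, a1, a2, a3, a4} : Finset V) :=
    (Finset.eq_of_subset_of_card_le hsub5 (by rw [hncard, hcard5])).symm
  -- t = a4
  have hteq : t = a4 := by
    have htmem : t ∈ ({a0, a1, a2, a3, a4} : Finset V) := hneq ▸ htn
    have ht0 : t ≠ a0 := by
      rintro rfl
      rcases (iff0 a3 ha3).1 adj3t.symm with hh | hh
      · exact h31 hh
      · exact h34 hh
    have ht1 : t ≠ a1 := by
      rintro rfl
      rcases (iff1 a3 ha3).1 adj3t.symm with hh | hh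
      · exact h30 hh
      · exact (Ne.symm h23) hh
    have ht3 : t ≠ a3 := (G.ne_of_adj adj3t).symm
    simp only [Finset.mem_insert, Finset.mem_singleton, ht0, ht1, ht2, ht3,
      false_or] at htmem
    exact htmem
  have iff3' : ∀ w ∈ n, (G.Adj a3 w ↔ w = a2 ∨ w = a4) := by
    intro w hw; rw [iff3 w hw, hteq]
  have adj34 : G.Adj a3 a4 := hteq ▸ adj3t
  obtain ⟨t', ht'n, ht'3, adj4t, iff4⟩ := other a4 ha4 a3 ha3 adj34.symm
  have ht'eq : t' = a0 := by
    have htmem : t' ∈ ({a0, a1, a2, a3, a4} : Finset V) := hneq ▸ ht'n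
    have ht1 : t' ≠ a1 := by
      rintro rfl
      rcases (iff1 a4 ha4).1 adj4t.symm with hh | hh
      · exact (Ne.symm h04) hh
      · exact (Ne.symm h24) hh
    have ht2' : t' ≠ a2 := by
      rintro rfl
      rcases (iff2 a4 ha4).1 adj4t.symm with hh | hh
      · exact (Ne.symm h14) hh
      · exact (Ne.symm h34) hh
    have ht4 : t' ≠ a4 := (G.ne_of_adj adj4t).symm
    simp only [Finset.mem_insert, Finset.mem_singleton, ht1, ht2', ht'3, ht4,
      or_false] at htmem
    exact htmem
  have iff4' : ∀ w ∈ n, (G.Adj a4 w ↔ w = a3 ∨ w = a0) := by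
    intro w hw; rw [iff4 w hw, ht'eq]
  have adj40 : G.Adj a4 a0 := ht'eq ▸ adj4t
  have na02 : ¬ G.Adj a0 a2 := by
    intro hh; rcases (iff0 a2 ha2).1 hh with h | h
    · exact h12 h.symm
    · exact h24 h
  have na03 : ¬ G.Adj a0 a3 := by
    intro hh; rcases (iff0 a3 ha3).1 hh with h | h
    · exact h31 h
    · exact h34 h
  have na13 : ¬ G.Adj a1 a3 := by
    intro hh; rcases (iff1 a3 ha3).1 hh with h | h
    · exact h30 h
    · exact h23 h.symm
  have na14 : ¬ G.Adj a1 a4 := by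
    intro hh; rcases (iff1 a4 ha4).1 hh with h | h
    · exact h04 h.symm
    · exact h24 h.symm
  have na24 : ¬ G.Adj a2 a4 := by
    intro hh; rcases (iff2 a4 ha4).1 hh with h | h
    · exact h14 h.symm
    · exact h34 h.symm
  have adj10 := adj01.symm
  have adj21 := adj12.symm
  have adj32 := adj23.symm
  have adj43 := adj34.symm
  have adj04' := adj40.symm
  have na20 : ¬ G.Adj a2 a0 := fun h => na02 h.symm
  have na30 : ¬ G.Adj a3 a0 := fun h => na03 h.symm
  have na31 : ¬ G.Adj a3 a1 := fun h => na13 h.symm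
  have na41 : ¬ G.Adj a4 a1 := fun h => na14 h.symm
  have na42 : ¬ G.Adj a4 a2 := fun h => na24 h.symm
  have hva0 : G.Adj v a0 := (hmemn _).1 ha0
  have hva1 : G.Adj v a1 := (hmemn _).1 ha1
  have hva2 : G.Adj v a2 := (hmemn _).1 ha2
  have hva3 : G.Adj v a3 := (hmemn _).1 ha3
  have hva4 : G.Adj v a4 := (hmemn _).1 ha4
  refine ⟨![a0, a1, a2, a3, a4], ?_, ?_, ?_, ?_⟩
  · intro i j hij
    fin_cases i <;> fin_cases j <;>
      simp only [Matrix.cons_val_zero, Matrix.cons_val_one, Matrix.head_cons,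
        Matrix.cons_val_two, Matrix.tail_cons, Matrix.cons_val_three,
        Matrix.cons_val_four, Fin.zero_eta, Fin.mk_one] at hij <;>
      first
        | rfl
        | exact absurd hij h01 | exact absurd hij.symm h01
        | exact absurd hij.symm h20 | exact absurd hij h20
        | exact absurd hij.symm h30 | exact absurd hij h30
        | exact absurd hij h04 | exact absurd hij.symm h04
        | exact absurd hij h12 | exact absurd hij.symm h12
        | exact absurd hij.symm h31 | exact absurd hij h31
        | exact absurd hij h14 | exact absurd hij.symm h14
        | exact absurd hij h23 | exact absurd hij.symm h23
        | exact absurd hij h24 | exact absurd hij.symm h24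
        | exact absurd hij h34 | exact absurd hij.symm h34
  · intro i
    fin_cases i <;>
      simp only [Matrix.cons_val_zero, Matrix.cons_val_one, Matrix.head_cons,
        Matrix.cons_val_two, Matrix.tail_cons, Matrix.cons_val_three,
        Matrix.cons_val_four, Fin.zero_eta, Fin.mk_one] <;>
      first | exact hva0 | exact hva1 | exact hva2 | exact hva3 | exact hva4
  · intro x hx
    have hxn : x ∈ n := (hmemn x).2 hx
    rw [hneq] at hxn
    simp only [Finset.mem_insert, Finset.mem_singleton] at hxn
    rcases hxn with rfl | rfl | rfl | rfl | rfl
    exacts [⟨0, rfl⟩, ⟨1, rfl⟩, ⟨2, rfl⟩, ⟨3, rfl⟩, ⟨4, rfl⟩]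
  · intro i j
    fin_cases i <;> fin_cases j <;>
      simp only [Matrix.cons_val_zero, Matrix.cons_val_one, Matrix.head_cons,
        Matrix.cons_val_two, Matrix.tail_cons, Matrix.cons_val_three,
        Matrix.cons_val_four, Fin.zero_eta, Fin.mk_one] <;>
      first
        | exact iff_of_false (G.irrefl) (by decide)
        | exact iff_of_true adj01 (by decide)
        | exact iff_of_true adj12 (by decide)
        | exact iff_of_true adj23 (by decide)
        | exact iff_of_true adj34 (by decide)
        | exact iff_of_true adj40 (by decide)
        | exact iff_of_true adj10 (by decide)
        | exact iff_of_true adj21 (by decide)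
        | exact iff_of_true adj32 (by decide)
        | exact iff_of_true adj43 (by decide)
        | exact iff_of_true adj04' (by decide)
        | exact iff_of_false na02 (by decide)
        | exact iff_of_false na03 (by decide)
        | exact iff_of_false na13 (by decide)
        | exact iff_of_false na14 (by decide)
        | exact iff_of_false na24 (by decide)
        | exact iff_of_false na20 (by decide)
        | exact iff_of_false na30 (by decide)
        | exact iff_of_false na31 (by decide)
        | exact iff_of_false na41 (by decide)
        | exact iff_of_false na42 (by decide)

set_option maxRecDepth 10000 in
private lemma csp_aux : ∀ β : Fin 5 → Option (Fin 2), ∃ r : Fin 5 → Fin 2, ∃ w : Fin 2,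
    (∀ i γ, β (i + 4) = some γ → β i = some γ → r i ≠ γ) ∧
    (∀ i γ, β i = some γ → ¬(r i = γ ∧ r (i + 1) = γ)) ∧
    (∀ i, ¬(r i = w ∧ r (i + 1) = w)) := by decide

/-- For a claw-free, `K₅`-minor-free graph without 4-cliques and a vertex `v`
of degree 5: if `G - v` is 2-clique-colorable then so is `G`. -/
theorem delete_degree_five_vertex_two_clique_colorable {V : Type*} [Fintype V] [DecidableEq V]
    (G : SimpleGraph V) [DecidableRel G.Adj]
    (hclaw : G.ClawFree) (hK5 : ¬ G.HasMinor (⊤ : SimpleGraph (Fin 5)))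
    (h4 : G.CliqueFree 4)
    (v : V) (hv : G.degree v = 5)
    (h : (G.induce {u : V | u ≠ v}).CliqueColorable 2) :
    G.CliqueColorable 2 := by
  classical
  obtain ⟨c, hc⟩ := h
  obtain ⟨a, hainj, hava, hasurj, haadj⟩ := rim_aux G hclaw h4 v hv
  -- small Fin 5 arithmetic facts
  have fin1 : ∀ i : Fin 5, i + 4 + 1 = i := by decide
  have fin2 : ∀ i : Fin 5, i + 1 ≠ i := by decide
  have fin3 : ∀ i : Fin 5, i = i + 4 + 1 := by decide
  have fin4 : ∀ i : Fin 5, ¬(i + 4 = i + 1 + 1 ∨ i + 1 = i + 4 + 1) := by decide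
  have fin5 : ∀ i : Fin 5, i + 1 ≠ i + 4 := by decide
  have fin6 : ∀ m k : Fin 5, (k = m + 1 ∨ m = k + 1) → (k + 1 = m + 1 ∨ m = k + 1 + 1) →
      m = k ∨ m = k + 1 := by decide
  have fin7 : ∀ i : Fin 5, i + 4 ≠ i := by decide
  have adjnext : ∀ i : Fin 5, G.Adj (a i) (a (i + 1)) := fun i => (haadj i (i + 1)).2 (Or.inl rfl)
  have adjprev : ∀ i : Fin 5, G.Adj (a i) (a (i + 4)) := fun i =>
    (haadj i (i + 4)).2 (Or.inr (fin3 i))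
  have havne : ∀ i, a i ≠ v := fun i he => G.irrefl (he ▸ (hava i))
  -- witnesses for edges of the rim
  set Wit : Fin 5 → V → Prop := fun i w =>
    w ≠ v ∧ ¬ G.Adj v w ∧ G.Adj (a i) w ∧ G.Adj (a (i + 1)) w with hWit
  have wit_uniq : ∀ i w w', Wit i w → Wit i w' → w = w' := by
    rintro i w w' ⟨hw1, hw2, hw3, hw4⟩ ⟨hw1', hw2', hw3', hw4'⟩
    by_contra hne
    by_cases hadj : G.Adj w w'
    · exact k4_aux G h4 (adjnext i) hw3 hw3' hw4 hw4' hadj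
    · exact claw_aux G hclaw (hava i).symm hw3 hw3' hw2 hw2' hadj
        (Ne.symm hw1) (Ne.symm hw1') hne
  set β : Fin 5 → Option (Fin 2) := fun i =>
    if hw : ∃ w, Wit i w then
      some (c ⟨Classical.choose hw, (Classical.choose_spec hw).1⟩)
    else none with hβ
  have βspec : ∀ i w (hwit : Wit i w) (hwv : w ≠ v), β i = some (c ⟨w, hwv⟩) := by
    intro i w hwit hwv
    have hex : ∃ w, Wit i w := ⟨w, hwit⟩
    rw [hβ]
    simp only [dif_pos hex]
    congr 1
    exact congrArg c (Subtype.ext (wit_uniq i _ _ (Classical.choose_spec hex) hwit))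
  obtain ⟨r, v', hA, hB, hC⟩ := csp_aux β
  -- the new coloring
  set c' : V → Fin 2 := fun x =>
    if hx : ∃ i, a i = x then r (Classical.choose hx)
    else if hxv : x = v then v' else c ⟨x, hxv⟩ with hc'
  have hc'a : ∀ i, c' (a i) = r i := by
    intro i
    have hex : ∃ j, a j = a i := ⟨i, rfl⟩
    rw [hc']
    simp only [dif_pos hex]
    congr 1
    exact hainj (Classical.choose_spec hex)
  have hvnotrim : ¬ ∃ i, a i = v := fun ⟨i, hi⟩ => havne i hi
  have hc'v : c' v = v' := by rw [hc']; simp [hvnotrim]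
  have hc'out : ∀ x (hx : x ≠ v), ¬ G.Adj v x → c' x = c ⟨x, hx⟩ := by
    intro x hx hnadj
    have hnr : ¬ ∃ i, a i = x := fun ⟨i, hi⟩ => hnadj (hi ▸ hava i)
    rw [hc']
    simp only [dif_neg hnr, dif_neg hx]
  refine ⟨c', ?_⟩
  intro s hs hnt
  by_contra hcon
  push_neg at hcon
  obtain ⟨hsC, hsM⟩ := hs
  by_cases hvs : v ∈ s
  · -- s contains v
    obtain ⟨x, hxs, hxv⟩ := hnt.exists_ne v
    have hadjvx : G.Adj v x := hsC hvs hxs (Ne.symm hxv)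
    obtain ⟨i, rfl⟩ := hasurj x hadjvx
    by_cases hsub : ∀ y ∈ s, y = v ∨ y = a i
    · have hclique : G.IsClique ({v, a i, a (i + 1)} : Set V) := by
        intro u hu w hw hne
        simp only [Set.mem_insert_iff, Set.mem_singleton_iff] at hu hw
        rcases hu with rfl | rfl | rfl <;> rcases hw with rfl | rfl | rfl <;>
          first
            | exact absurd rfl hne
            | exact hava i
            | exact hava (i + 1)
            | exact (hava i).symm
            | exact (hava (i + 1)).symm
            | exact adjnext i
            | exact (adjnext i).symm
      have heq := hsM _ hclique (by
        intro y hy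
        rcases hsub y hy with rfl | rfl <;> simp)
      have hmem : a (i + 1) ∈ s := by
        rw [heq]; simp
      rcases hsub _ hmem with he | he
      · exact havne (i + 1) he
      · exact fin2 i (hainj he)
    · push_neg at hsub
      obtain ⟨y, hys, hyv, hyai⟩ := hsub
      have hadjvy : G.Adj v y := hsC hvs hys (Ne.symm hyv)
      obtain ⟨j, rfl⟩ := hasurj y hadjvy
      have hadj : G.Adj (a i) (a j) := hsC hxs hys (fun he => hyai he.symm)
      have e1 : c' (a i) = c' v := hcon _ hxs v hvs
      have e2 : c' (a j) = c' v := hcon _ hys v hvs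
      rcases (haadj i j).1 hadj with hji | hji
      · subst hji
        exact hC i ⟨by rw [← hc'a i, e1, hc'v], by rw [← hc'a (i + 1), e2, hc'v]⟩
      · subst hji
        exact hC j ⟨by rw [← hc'a j, e2, hc'v], by rw [← hc'a (j + 1), e1, hc'v]⟩
  · -- v ∉ s
    by_cases hrims : ∃ i, a i ∈ s
    · obtain ⟨i, hais⟩ := hrims
      by_cases hrim2 : ∃ j, j ≠ i ∧ a j ∈ s
      · -- two rim vertices
        obtain ⟨j, hji, hajs⟩ := hrim2
        have hadj : G.Adj (a i) (a j) := hsC hais hajs (fun he => hji (hainj he).symm)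
        have hpair : ∃ k, a k ∈ s ∧ a (k + 1) ∈ s := by
          rcases (haadj i j).1 hadj with he | he
          · exact ⟨i, hais, he ▸ hajs⟩
          · exact ⟨j, hajs, he ▸ hais⟩
        obtain ⟨k, hk1, hk2⟩ := hpair
        have hthird : ∀ m, a m ∈ s → m = k ∨ m = k + 1 := by
          intro m hm
          by_cases h1 : m = k
          · exact Or.inl h1
          by_cases h2 : m = k + 1
          · exact Or.inr h2
          have had1 : G.Adj (a m) (a k) := hsC hm hk1 (fun he => h1 (hainj he))
          have had2 : G.Adj (a m) (a (k + 1)) := hsC hm hk2 (fun he => h2 (hainj he))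
          exact fin6 m k ((haadj m k).1 had1) ((haadj m (k + 1)).1 had2)
        by_cases hP : ∃ w ∈ s, w ≠ a k ∧ w ≠ a (k + 1)
        · obtain ⟨w, hws, hw1, hw2⟩ := hP
          have hwv : w ≠ v := fun he => hvs (he ▸ hws)
          have hnadj : ¬ G.Adj v w := by
            intro hadjw
            obtain ⟨m, hm⟩ := hasurj w hadjw
            rcases hthird m (hm ▸ hws) with rfl | rfl
            · exact hw1 hm.symm
            · exact hw2 hm.symm
          have hwit : Wit k w := ⟨hwv, hnadj,
            hsC hk1 hws (Ne.symm hw1), hsC hk2 hws (Ne.symm hw2)⟩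
          have hβk := βspec k w hwit hwv
          have e1 : c' (a k) = c' w := hcon _ hk1 _ hws
          have e2 : c' (a (k + 1)) = c' w := hcon _ hk2 _ hws
          exact hB k (c ⟨w, hwv⟩) hβk
            ⟨by rw [← hc'a k, e1, hc'out w hwv hnadj],
             by rw [← hc'a (k + 1), e2, hc'out w hwv hnadj]⟩
        · push_neg at hP
          have hclique : G.IsClique ({v, a k, a (k + 1)} : Set V) := by
            intro u hu w hw hne
            simp only [Set.mem_insert_iff, Set.mem_singleton_iff] at hu hw
            rcases hu with rfl | rfl | rfl <;> rcases hw with rfl | rfl | rfl <;>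
              first
                | exact absurd rfl hne
                | exact hava k
                | exact hava (k + 1)
                | exact (hava k).symm
                | exact (hava (k + 1)).symm
                | exact adjnext k
                | exact (adjnext k).symm
          have heq := hsM _ hclique (by
            intro y hy
            by_cases hyk : y = a k
            · subst hyk; simp
            · have := hP y hy hyk; subst this; simp)
          have : v ∈ s := by rw [heq]; simp
          exact hvs this
      · -- a single rim vertex
        push_neg at hrim2
        have hout : ∀ w ∈ s, w ≠ a i → (w ≠ v ∧ ¬ G.Adj v w ∧ G.Adj (a i) w) := by
          intro w hws hwne
          have hwv : w ≠ v := fun he => hvs (he ▸ hws)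
          have hnadj : ¬ G.Adj v w := by
            intro hadjw
            obtain ⟨j, hj⟩ := hasurj w hadjw
            by_cases hji : j = i
            · exact hwne (hji ▸ hj).symm
            · exact hrim2 j hji (hj ▸ hws)
          exact ⟨hwv, hnadj, hsC hais hws (fun he => hwne he.symm)⟩
        have hside : ∀ w ∈ s, w ≠ a i → (G.Adj (a (i + 1)) w ∨ G.Adj (a (i + 4)) w) := by
          intro w hws hwne
          obtain ⟨hwv, hnadj, hadjiw⟩ := hout w hws hwne
          by_contra hcon2
          push_neg at hcon2
          have hni : ¬ G.Adj (a (i + 1)) (a (i + 4)) := fun hh => fin4 i ((haadj _ _).1 hh)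
          have hne1 : a (i + 1) ≠ a (i + 4) := fun he => fin5 i (hainj he)
          have hne2 : a (i + 1) ≠ w := fun he => hrim2 (i + 1) (fin2 i) (he ▸ hws)
          have hne3 : a (i + 4) ≠ w := fun he => hrim2 (i + 4) (fin7 i) (he ▸ hws)
          exact claw_aux G hclaw (adjnext i) (adjprev i) hadjiw hni hcon2.1 hcon2.2
            hne1 hne2 hne3
        by_cases hplus : ∀ w ∈ s, w ≠ a i → G.Adj (a (i + 1)) w
        · have hclique : G.IsClique (insert (a (i + 1)) s) := by
            intro x hx y hy hne
            rcases Set.mem_insert_iff.1 hx with rfl | hxs2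
            · rcases Set.mem_insert_iff.1 hy with rfl | hys2
              · exact absurd rfl hne
              · by_cases hyi : y = a i
                · subst hyi; exact (adjnext i).symm
                · exact hplus y hys2 hyi
            · rcases Set.mem_insert_iff.1 hy with rfl | hys2
              · by_cases hxi : x = a i
                · subst hxi; exact adjnext i
                · exact (hplus x hxs2 hxi).symm
              · exact hsC hxs2 hys2 hne
          have heq := hsM _ hclique (Set.subset_insert _ _)
          have : a (i + 1) ∈ s := by rw [heq]; exact Set.mem_insert _ _
          exact hrim2 (i + 1) (fin2 i) this
        by_cases hminus : ∀ w ∈ s, w ≠ a i → G.Adj (a (i + 4)) w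
        · have hclique : G.IsClique (insert (a (i + 4)) s) := by
            intro x hx y hy hne
            rcases Set.mem_insert_iff.1 hx with rfl | hxs2
            · rcases Set.mem_insert_iff.1 hy with rfl | hys2
              · exact absurd rfl hne
              · by_cases hyi : y = a i
                · subst hyi; exact (adjprev i).symm
                · exact hminus y hys2 hyi
            · rcases Set.mem_insert_iff.1 hy with rfl | hys2
              · by_cases hxi : x = a i
                · subst hxi; exact adjprev i
                · exact (hminus x hxs2 hxi).symm
              · exact hsC hxs2 hys2 hne
          have heq := hsM _ hclique (Set.subset_insert _ _)
          have hmem : a (i + 4) ∈ s := by rw [heq]; exact Set.mem_insert _ _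
          exact hrim2 (i + 4) (fin7 i) hmem
        · push_neg at hplus hminus
          obtain ⟨w1, hw1s, hw1ne, hw1nadj⟩ := hplus
          obtain ⟨w2, hw2s, hw2ne, hw2nadj⟩ := hminus
          have hs1 : G.Adj (a (i + 4)) w1 := (hside w1 hw1s hw1ne).resolve_left hw1nadj
          have hs2 : G.Adj (a (i + 1)) w2 := (hside w2 hw2s hw2ne).resolve_right hw2nadj
          obtain ⟨hw1v, hw1nv, hadjw1⟩ := hout w1 hw1s hw1ne
          obtain ⟨hw2v, hw2nv, hadjw2⟩ := hout w2 hw2s hw2ne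
          have hwit1 : Wit (i + 4) w1 := ⟨hw1v, hw1nv, hs1, by rw [fin1 i]; exact hadjw1⟩
          have hwit2 : Wit i w2 := ⟨hw2v, hw2nv, hadjw2, hs2⟩
          have hβ1 := βspec _ _ hwit1 hw1v
          have hβ2 := βspec _ _ hwit2 hw2v
          have e0 : c' (a i) = c' w1 := hcon _ hais _ hw1s
          have e1 : c' w1 = c' w2 := hcon _ hw1s _ hw2s
          have ec : c ⟨w2, hw2v⟩ = c ⟨w1, hw1v⟩ := by
            rw [← hc'out w2 hw2v hw2nv, ← hc'out w1 hw1v hw1nv]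
            exact e1.symm
          have hβ2' : β i = some (c ⟨w1, hw1v⟩) := by rw [hβ2, ec]
          exact hA i (c ⟨w1, hw1v⟩) hβ1 hβ2'
            (by rw [← hc'a i, e0, hc'out w1 hw1v hw1nv])
    · -- no rim vertex: clique away from v's closed neighbourhood
      push_neg at hrims
      set S : Set ({u : V | u ≠ v}) := {x | ↑x ∈ s} with hS
      have hSclique : (G.induce {u : V | u ≠ v}).IsClique S := by
        intro x hx y hy hne
        exact hsC hx hy (fun he => hne (Subtype.ext he))
      have hSmax : ∀ t, (G.induce {u : V | u ≠ v}).IsClique t → S ⊆ t → S = t := by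
        intro t ht hSt
        have htG : G.IsClique (Subtype.val '' t) := by
          rintro x ⟨x', hx', rfl⟩ y ⟨y', hy', rfl⟩ hne
          exact ht hx' hy' (fun he => hne (congrArg Subtype.val he))
        have hsub : s ⊆ Subtype.val '' t := by
          intro x hxs
          exact ⟨⟨x, fun he => hvs (he ▸ hxs)⟩, hSt hxs, rfl⟩
        have heq := hsM _ htG hsub
        apply Set.Subset.antisymm hSt
        intro x hxt
        have : (x : V) ∈ s := heq ▸ Set.mem_image_of_mem _ hxt
        exact this
      have hSnt : S.Nontrivial := by
        obtain ⟨x, hx, y, hy, hxy⟩ := hnt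
        exact ⟨⟨x, fun he => hvs (he ▸ hx)⟩, hx, ⟨y, fun he => hvs (he ▸ hy)⟩, hy,
          fun he => hxy (congrArg Subtype.val he)⟩
      obtain ⟨u, hu, w, hw, hcuw⟩ := hc S ⟨hSclique, hSmax⟩ hSnt
      apply hcuw
      have hnadju : ¬ G.Adj v ↑u := by
        intro hadj
        obtain ⟨i, hi⟩ := hasurj _ hadj
        exact hrims i (hi ▸ hu)
      have hnadjw : ¬ G.Adj v ↑w := by
        intro hadj
        obtain ⟨i, hi⟩ := hasurj _ hadj
        exact hrims i (hi ▸ hw)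
      have h1 : c' ↑u = c u := by
        rw [hc'out ↑u u.2 hnadju]
      have h2 : c' ↑w = c w := by
        rw [hc'out ↑w w.2 hnadjw]
      rw [← h1, ← h2]
      exact hcon _ hu _ hw
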